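/- Fix a real number M > 1. There exist constants K > 0 and δ > 0 such that for every integer i ≥ 1, every real p₀ and every vector p ∈ ℝ³, the complex number C_i(p₀,p) = ∫_{M^{-2i}}^{M^{-2(i-1)}} (-i·p₀ + (‖p‖² - 1))·exp(-α·(p₀² + (‖p‖² - 1)²)) dα satisfies ‖C_i(p₀,p)‖ ≤ K·M^{-i}·exp(-δ·M^{-i}·(|p₀| + ‖p‖²)). -/

import Mathlib

open Complex

set_option maxHeartbeats 1000000 in
theorem sliced_propagator_bound (M : ℝ) (hM : M > 1) :
    ∃ K δ : ℝ, K > 0 ∧ δ > 0 ∧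
      ∀ i : ℕ, i ≥ 1 → ∀ p₀ : ℝ, ∀ p : EuclideanSpace ℝ (Fin 3),
        ‖∫ α in (M ^ (-2 * (i : ℝ)))..(M ^ (-2 * ((i : ℝ) - 1))),
            (-(p₀ : ℂ) * Complex.I + ((‖p‖ ^ 2 - 1 : ℝ) : ℂ)) *
              Complex.exp (-(α : ℂ) * (((p₀ ^ 2 + (‖p‖ ^ 2 - 1) ^ 2 : ℝ)) : ℂ))‖
          ≤ K * M ^ (-(i : ℝ)) * Real.exp (-δ * M ^ (-(i : ℝ)) * (|p₀| + ‖p‖ ^ 2)) := by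
  have hM0 : (0:ℝ) < M := lt_trans one_pos hM
  refine ⟨M ^ 2 * Real.exp 1, 1/4, by positivity, by norm_num, ?_⟩
  intro i hi p₀ p
  set s : ℝ := M ^ (-(i:ℝ)) with hs
  have hs0 : 0 < s := Real.rpow_pos_of_pos hM0 _
  have hs1 : s ≤ 1 := Real.rpow_le_one_of_one_le_of_nonpos hM.le
    (neg_nonpos.mpr (Nat.cast_nonneg i))
  set e : ℝ := ‖p‖ ^ 2 - 1 with he
  set E : ℝ := p₀ ^ 2 + e ^ 2 with hE
  have hE0 : 0 ≤ E := by positivity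
  have hA : M ^ (-2 * (i:ℝ)) = s * s := by
    rw [hs, ← Real.rpow_add hM0]; congr 1; ring
  have hB : M ^ (-2 * ((i:ℝ) - 1)) = M ^ 2 * (s * s) := by
    rw [hs, ← Real.rpow_add hM0, ← Real.rpow_natCast M 2, ← Real.rpow_add hM0]
    congr 1; push_cast; ring
  rw [hA, hB]
  clear_value s e E
  have hM2 : (1:ℝ) ≤ M ^ 2 := by nlinarith
  have hab : s * s ≤ M ^ 2 * (s * s) := by nlinarith [mul_pos hs0 hs0]
  -- pointwise bound on the integrand
  have hnorm : ∀ α ∈ Set.uIoc (s*s) (M^2*(s*s)),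
      ‖(-(p₀ : ℂ) * Complex.I + ((e : ℝ) : ℂ)) *
        Complex.exp (-(α : ℂ) * ((E : ℝ) : ℂ))‖
        ≤ Real.sqrt E * Real.exp (-(s*s) * E) := by
    intro α hα
    rw [Set.uIoc_of_le hab] at hα
    rw [norm_mul]
    have h1 : ‖(-(p₀ : ℂ) * Complex.I + ((e : ℝ) : ℂ))‖ = Real.sqrt E := by
      rw [Complex.norm_def, Complex.normSq_apply]
      congr 1
      simp [hE]
      ring
    have h2 : ‖Complex.exp (-(α : ℂ) * ((E : ℝ) : ℂ))‖ = Real.exp (-(α * E)) := by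
      rw [Complex.norm_exp]
      congr 1
      simp
    rw [h1, h2]
    gcongr
    have := hα.1.le
    nlinarith
  have hbound := intervalIntegral.norm_integral_le_of_norm_le_const hnorm
  refine le_trans hbound ?_
  have hlen : |M ^ 2 * (s*s) - s*s| ≤ M ^ 2 * (s * s) := by
    rw [_root_.abs_of_nonneg (by nlinarith [mul_pos hs0 hs0])]; nlinarith [mul_pos hs0 hs0]
  have step1 : Real.sqrt E * Real.exp (-(s*s) * E) * |M ^ 2 * (s*s) - s*s|
      ≤ M ^ 2 * s * (s * Real.sqrt E * Real.exp (-(s*s) * E)) := by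
    have h := mul_le_mul_of_nonneg_left hlen
      (by positivity : (0:ℝ) ≤ Real.sqrt E * Real.exp (-(s*s) * E))
    calc Real.sqrt E * Real.exp (-(s*s) * E) * |M ^ 2 * (s*s) - s*s|
        ≤ Real.sqrt E * Real.exp (-(s*s) * E) * (M ^ 2 * (s*s)) := h
      _ = M ^ 2 * s * (s * Real.sqrt E * Real.exp (-(s*s) * E)) := by ring
  refine le_trans step1 ?_
  -- key: s√E e^{-s²E} ≤ e^{-s²E/2}
  have key1 : s * Real.sqrt E * Real.exp (-(s*s) * E) ≤ Real.exp (-(s*s*E)/2) := by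
    set t : ℝ := s * Real.sqrt E with ht
    have ht0 : 0 ≤ t := by positivity
    have ht2 : t ^ 2 = s * s * E := by
      rw [ht, mul_pow, Real.sq_sqrt hE0]; ring
    have h3 : t ≤ Real.exp (t^2/2) := by
      have := Real.add_one_le_exp (t^2/2)
      nlinarith
    calc t * Real.exp (-(s*s) * E) = t * Real.exp (-(t^2)) := by rw [ht2]; ring_nf
      _ ≤ Real.exp (t^2/2) * Real.exp (-(t^2)) := by
          exact mul_le_mul_of_nonneg_right h3 (Real.exp_pos _).le
      _ = Real.exp (-(s*s*E)/2) := by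
          rw [← Real.exp_add, ht2]; ring_nf
  -- key2: quadratic dominates linear up to additive constant 1
  have key2 : Real.exp (-(s*s*E)/2) ≤
      Real.exp 1 * Real.exp (-(1/4) * s * (|p₀| + ‖p‖ ^ 2)) := by
    rw [← Real.exp_add]
    apply Real.exp_le_exp.mpr
    have habs0 : |p₀| ^ 2 = p₀ ^ 2 := sq_abs p₀
    have habse : |e| ^ 2 = e ^ 2 := sq_abs e
    have h1 : s * |p₀| * (1/4) ≤ (s*|p₀|)^2/2 + 1/32 := by
      nlinarith [sq_nonneg (s*|p₀| - 1/4)]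
    have h2 : s * |e| * (1/4) ≤ (s*|e|)^2/2 + 1/32 := by
      nlinarith [sq_nonneg (s*|e| - 1/4)]
    have h4 : ‖p‖ ^ 2 = e + 1 := by rw [he]; ring
    have h5 : e ≤ |e| := le_abs_self e
    have h6 : 0 ≤ |p₀| := abs_nonneg _
    have h7 : 0 ≤ |e| := abs_nonneg _
    have e1 : (s*|p₀|)^2 = s^2*p₀^2 := by rw [mul_pow, habs0]
    have e2 : (s*|e|)^2 = s^2*e^2 := by rw [mul_pow, habse]
    rw [e1] at h1; rw [e2] at h2
    have h3 : s * (e + 1) * (1/4) ≤ s * |e| * (1/4) + 1/4 := by nlinarith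
    have hss : s * s = s^2 := (sq s).symm
    rw [hE, h4]
    nlinarith [h1, h2, h3, hss]
  calc M ^ 2 * s * (s * Real.sqrt E * Real.exp (-(s*s) * E))
      ≤ M ^ 2 * s * Real.exp (-(s*s*E)/2) := by
        exact mul_le_mul_of_nonneg_left key1 (by positivity)
    _ ≤ M ^ 2 * s * (Real.exp 1 * Real.exp (-(1/4) * s * (|p₀| + ‖p‖ ^ 2))) := by
        exact mul_le_mul_of_nonneg_left key2 (by positivity)
    _ = M ^ 2 * Real.exp 1 * s * Real.exp (-(1/4) * s * (|p₀| + ‖p‖ ^ 2)) := by ring
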